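/- Let A = k[x, z₁, z₂, …]/(x·z₁, {z_k − x·z_{k+1}}_{k≥1}, {z_i·z_j}_{i,j≥1}) over a field k and let B = A/(z₁). Then for every n ≥ 1 the induced map A/(xⁿ) → B/(xⁿ) is an isomorphism (both equal k[x]/(xⁿ)), the localizations A_x → B_x are isomorphic (both equal k[x]_x), yet the surjection A → B is not an isomorphism. -/

import Mathlib

open MvPolynomial

set_option maxHeartbeats 1600000
set_option synthInstance.maxHeartbeats 800000

noncomputable section

/-- The polynomial ring `k[x, z₁, z₂, …]`, with `x` indexed by `none` and
`z_{n+1}` indexed by `some n`. -/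
abbrev ExPolyRing (k : Type*) [Field k] := MvPolynomial (Option ℕ) k

/-- The variable `x`. -/
def exX (k : Type*) [Field k] : ExPolyRing k := X none

/-- The variable `z_{n+1}`. -/
def exZ (k : Type*) [Field k] (n : ℕ) : ExPolyRing k := X (some n)

/-- The ideal `(x z₁, {z_k − x z_{k+1}}_{k ≥ 1}, {z_i z_j}_{i,j ≥ 1})`. -/
def exRel (k : Type*) [Field k] : Ideal (ExPolyRing k) :=
  Ideal.span ({exX k * exZ k 0} ∪
    (Set.range fun n : ℕ => exZ k n - exX k * exZ k (n + 1)) ∪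
    (Set.range fun p : ℕ × ℕ => exZ k p.1 * exZ k p.2))

/-- The ring `A = k[x, z₁, z₂, …]/(x z₁, {z_k − x z_{k+1}}, {z_i z_j})`. -/
abbrev ExA (k : Type*) [Field k] := ExPolyRing k ⧸ exRel k

/-- The image of `x` in `A`. -/
def exXA (k : Type*) [Field k] : ExA k := Ideal.Quotient.mk _ (exX k)

/-- The image of `z₁` in `A`. -/
def exZA (k : Type*) [Field k] : ExA k := Ideal.Quotient.mk _ (exZ k 0)

/-- The surjection `A → B = A/(z₁)`. -/
def exToB (k : Type*) [Field k] : ExA k →+* ExA k ⧸ Ideal.span {exZA k} :=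
  Ideal.Quotient.mk _

lemma span_pow_le_comap {R S : Type*} [CommRing R] [CommRing S]
    (f : R →+* S) (a : R) (n : ℕ) :
    Ideal.span {a ^ n} ≤ (Ideal.span {f a ^ n}).comap f := by
  rw [Ideal.span_le, Set.singleton_subset_iff]
  simp only [SetLike.mem_coe, Ideal.mem_comap, map_pow]
  exact Ideal.subset_span rfl

/-! ### Auxiliary material -/

section Aux

variable (k : Type*) [Field k]

/-- The shift operator on sequences. -/
def exShift : (ℕ → k) →ₗ[k] (ℕ → k) where
  toFun f n := f (n + 1)
  map_add' _ _ := rfl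
  map_smul' _ _ := rfl

/-- The `k[X]`-module `M` on which `X` acts as the shift. -/
abbrev ExM := Module.AEval' (exShift k)

instance : Module (Polynomial k)ᵐᵒᵖ (ExM k) :=
  Module.compHom (ExM k)
    ((RingHom.id (Polynomial k)).fromOpposite fun _ _ => Commute.all _ _)

instance : IsCentralScalar (Polynomial k) (ExM k) := ⟨fun _ _ => rfl⟩

/-- The trivial square-zero extension `k[X] ⊕ M`. -/
abbrev ExT := TrivSqZeroExt (Polynomial k) (ExM k)

/-- basis elements of `M` -/
def exE (n : ℕ) : ExM k := Module.AEval'.of (exShift k) (Pi.single n 1)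

lemma exShift_single (n : ℕ) : exShift k (Pi.single (n + 1) 1) = Pi.single n 1 := by
  funext m
  simp [exShift, Pi.single_apply]

lemma exShift_single_zero : exShift k (Pi.single 0 1) = 0 := by
  funext m
  simp [exShift, Pi.single_apply]

/-- The test homomorphism `k[x,z₁,…] → k[X] ⊕ M`. -/
def exChi : ExPolyRing k →+* ExT k :=
  eval₂Hom ((TrivSqZeroExt.inlHom (Polynomial k) (ExM k)).comp Polynomial.C)
    fun i => i.elim (TrivSqZeroExt.inl Polynomial.X) fun n => TrivSqZeroExt.inr (exE k n)

lemma exChi_X : exChi k (exX k) = TrivSqZeroExt.inl Polynomial.X := by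
  simp [exChi, exX]

lemma exChi_Z (n : ℕ) : exChi k (exZ k n) = TrivSqZeroExt.inr (exE k n) := by
  simp [exChi, exZ]

lemma exRel_le_ker : exRel k ≤ RingHom.ker (exChi k) := by
  rw [exRel, Ideal.span_le]
  rintro p ((rfl | ⟨n, rfl⟩) | ⟨⟨i, j⟩, rfl⟩) <;>
    simp only [SetLike.mem_coe, RingHom.mem_ker, map_mul, map_sub, exChi_X, exChi_Z]
  · rw [TrivSqZeroExt.inl_mul_inr]
    rw [show Polynomial.X • exE k 0 = 0 by
      rw [exE, Module.AEval'.X_smul_of, exShift_single_zero, map_zero]]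
    exact TrivSqZeroExt.inr_zero _
  · rw [TrivSqZeroExt.inl_mul_inr]
    rw [show Polynomial.X • exE k (n + 1) = exE k n by
      rw [exE, Module.AEval'.X_smul_of, exShift_single]; rfl]
    exact sub_self _
  · exact TrivSqZeroExt.inr_mul_inr _ _ _

lemma exZ_not_mem : exZ k 0 ∉ exRel k := by
  intro h
  have h0 : exChi k (exZ k 0) = 0 := exRel_le_ker k h
  rw [exChi_Z] at h0
  have : exE k 0 = 0 := by
    have := congrArg TrivSqZeroExt.snd h0
    simpa using this
  have : (Pi.single 0 1 : ℕ → k) = 0 :=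
    (Module.AEval'.of (exShift k)).injective (by simpa [exE] using this)
  have := congrFun this 0
  simp at this

lemma exZA_ne_zero : exZA k ≠ 0 := by
  rw [exZA, Ne, Ideal.Quotient.eq_zero_iff_mem]
  exact exZ_not_mem k

lemma exXA_mul_exZA : exXA k * exZA k = 0 := by
  rw [exXA, exZA, ← map_mul, Ideal.Quotient.eq_zero_iff_mem]
  exact Ideal.subset_span (Or.inl (Or.inl rfl))

lemma exZA_eq_pow (n : ℕ) :
    exZA k = exXA k ^ n * Ideal.Quotient.mk (exRel k) (exZ k n) := by
  induction n with
  | zero => simp [exZA]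
  | succ n ih =>
    have h : Ideal.Quotient.mk (exRel k) (exZ k n) =
        exXA k * Ideal.Quotient.mk (exRel k) (exZ k (n + 1)) := by
      rw [exXA, ← map_mul, Ideal.Quotient.eq]
      exact Ideal.subset_span (Or.inl (Or.inr ⟨n, rfl⟩))
    rw [ih, h, pow_succ]
    ring

lemma exZA_mem_pow (n : ℕ) : exZA k ∈ Ideal.span {exXA k ^ n} := by
  rw [exZA_eq_pow k n]
  exact Ideal.mul_mem_right _ _ (Ideal.subset_span rfl)

lemma exToB_surjective : Function.Surjective (exToB k) :=
  Ideal.Quotient.mk_surjective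

lemma ker_exToB : RingHom.ker (exToB k) = Ideal.span {exZA k} :=
  Ideal.mk_ker

end Aux

/-- The example at the end of Appendix A: with `A = k[x,z₁,z₂,…]/(xz₁, {z_k − x z_{k+1}},
{z_i z_j})` and `B = A/(z₁)`, the surjection `A → B` becomes an isomorphism modulo `xⁿ`
for every `n ≥ 1` and after inverting `x`, yet it is not an isomorphism. -/
theorem exA_to_exB_iso_mod_powers_and_localized_but_not_iso (k : Type*) [Field k] :
    (∀ n : ℕ, 1 ≤ n → Function.Bijective
      (@Ideal.quotientMap _ CommRing.toRing _ CommRing.toRing (Ideal.span {exXA k ^ n}) (Ideal.span {exToB k (exXA k) ^ n})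
        (Ideal.instIsTwoSided_1 _) (Ideal.instIsTwoSided_1 _) (exToB k)
        (by rw [Ideal.span_le, Set.singleton_subset_iff]
            simp only [SetLike.mem_coe, Ideal.mem_comap, map_pow]
            exact Ideal.subset_span rfl))) ∧
    Function.Bijective (Localization.awayMap (P := ExA k ⧸ Ideal.span {exZA k}) (exToB k) (exXA k)) ∧
    Function.Surjective (exToB k) ∧
    ¬ Function.Bijective (exToB k) := by
  refine ⟨?_, ⟨?_, ?_⟩, exToB_surjective k, ?_⟩
  · -- mod x^n
    intro n _
    constructor
    · refine Ideal.quotientMap_injective' ?_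
      intro a ha
      rw [Ideal.mem_comap] at ha
      replace ha := (Ideal.mem_span_singleton (α := ExA k ⧸ Ideal.span {exZA k})).mp ha
      obtain ⟨t, ht⟩ := ha
      obtain ⟨c, rfl⟩ := exToB_surjective k t
      have h0 : a - exXA k ^ n * c ∈ RingHom.ker (exToB k) := by
        rw [RingHom.mem_ker, map_sub, map_mul, map_pow, ht, sub_self]
      rw [ker_exToB, Ideal.mem_span_singleton] at h0
      obtain ⟨d, hd⟩ := h0
      have : a = exZA k * d + exXA k ^ n * c := by linear_combination hd
      rw [this]
      exact add_mem (Ideal.mul_mem_right _ _ (exZA_mem_pow k n))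
        (Ideal.mul_mem_right _ _ (Ideal.subset_span rfl))
    · intro y
      obtain ⟨s, rfl⟩ := Ideal.Quotient.mk_surjective y
      obtain ⟨a, rfl⟩ := exToB_surjective k s
      exact ⟨Ideal.Quotient.mk _ a, Ideal.quotientMap_mk⟩
  · -- localization injective
    rw [RingHom.injective_iff_ker_eq_bot, eq_bot_iff]
    intro xi hxi
    obtain ⟨⟨a, s⟩, rfl⟩ := IsLocalization.mk'_surjective (Submonoid.powers (exXA k)) xi
    rw [RingHom.mem_ker, Localization.awayMap, IsLocalization.Away.map,
      IsLocalization.map_mk', IsLocalization.mk'_eq_zero_iff] at hxi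
    obtain ⟨⟨_, p, rfl⟩, hp⟩ := hxi
    have hp' : exXA k ^ p * a ∈ RingHom.ker (exToB k) := by
      rw [RingHom.mem_ker, map_mul, map_pow]; exact hp
    rw [ker_exToB, Ideal.mem_span_singleton] at hp'
    obtain ⟨d, hd⟩ := hp'
    have hzero : exXA k ^ (p + 1) * a = 0 := by
      have : exXA k ^ (p + 1) * a = (exXA k * exZA k) * d := by
        rw [pow_succ]; linear_combination exXA k * hd
      rw [this, exXA_mul_exZA k, zero_mul]
    rw [Submodule.mem_bot, IsLocalization.mk'_eq_zero_iff]
    exact ⟨⟨exXA k ^ (p + 1), p + 1, rfl⟩, by rw [← hzero]⟩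
  · -- localization surjective
    intro y
    obtain ⟨⟨b, s⟩, rfl⟩ := IsLocalization.mk'_surjective (Submonoid.powers (exToB k (exXA k))) y
    obtain ⟨p, hp⟩ := s.2
    obtain ⟨a, rfl⟩ := exToB_surjective k b
    refine ⟨IsLocalization.mk' (Localization.Away (exXA k)) a
      (⟨exXA k ^ p, p, rfl⟩ : Submonoid.powers (exXA k)), ?_⟩
    rw [Localization.awayMap, IsLocalization.Away.map, IsLocalization.map_mk']
    congr 1
    exact Subtype.ext (by simpa using hp)
  · -- not bijective
    intro hbij
    have h1 : exToB k (exZA k) = 0 := by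
      rw [exToB, Ideal.Quotient.eq_zero_iff_mem]
      exact Ideal.subset_span rfl
    exact exZA_ne_zero k (hbij.1 (by rw [h1, map_zero]))

end
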